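/- arXiv:1501.01957 — 2 statements merged into one kernel-verified Lean document; each statement's English description precedes it below -/
import Mathlib

section
/- Integral formula for products of determinants (Lemma 1). Let a < b be reals, let m ≥ n ≥ 1 be integers, let f_1,…,f_m and g_1,…,g_n be real-valued integrable functions on [a,b) such that each product f_i·g_j is integrable on [a,b), and let c_{ij} (1 ≤ i ≤ m, n+1 ≤ j ≤ m) be real constants. For x_1,…,x_n ∈ [a,b), let A(x_1,…,x_n) be the m×m matrix with A_{ij} = f_i(x_j) for 1 ≤ j ≤ n and A_{ij} = c_{ij} for n+1 ≤ j ≤ m, and let B(x_1,…,x_n) be the n×n matrix with B_{ij} = g_i(x_j). Let E be the m×m matrix with E_{ij} = ∫_a^b f_i(x) g_j(x) dx for 1 ≤ j ≤ n and E_{ij} = c_{ij} for n+1 ≤ j ≤ m. Then ∫…∫ over the ordered region a ≤ x_n ≤ x_{n−1} ≤ … ≤ x_1 < b of det A(x_1,…,x_n)·det B(x_1,…,x_n) dx_1 … dx_n equals det E. -/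
open MeasureTheory Matrix BigOperators Finset

private lemma det_expand {m n : ℕ} (hnm : n ≤ m) (c : Fin m → Fin m → ℝ)
    (M : Fin m → Fin n → ℝ) :
    Matrix.det (Matrix.of fun i j : Fin m =>
        if h : (j : ℕ) < n then M i ⟨j, h⟩ else c i j)
      = ∑ τ : Equiv.Perm (Fin m), ((Equiv.Perm.sign τ : ℤ) : ℝ)
          * (∏ i ∈ Finset.univ.filter (fun i : Fin m => ¬ (i : ℕ) < n), c (τ i) i)
          * ∏ j : Fin n, M (τ (Fin.castLE hnm j)) j := by
  rw [Matrix.det_apply]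
  refine Finset.sum_congr rfl fun τ _ => ?_
  have h1 : ∀ i : Fin m, (Matrix.of fun i j : Fin m =>
      if h : (j : ℕ) < n then M i ⟨j, h⟩ else c i j) (τ i) i
      = if h : (i : ℕ) < n then M (τ i) ⟨i, h⟩ else c (τ i) i := fun i => rfl
  simp only [h1]
  have h2 : ∀ i : Fin m, (if h : (i : ℕ) < n then M (τ i) ⟨i, h⟩ else c (τ i) i)
      = if (i : ℕ) < n then (if h : (i : ℕ) < n then M (τ i) ⟨i, h⟩ else 0) else c (τ i) i := by
    intro i; by_cases h : (i : ℕ) < n <;> simp [h]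
  simp only [h2]
  rw [Finset.prod_ite]
  have h3 : Finset.univ.filter (fun i : Fin m => (i : ℕ) < n)
      = Finset.univ.image (Fin.castLE hnm) := by
    ext i
    simp only [Finset.mem_filter, Finset.mem_univ, true_and, Finset.mem_image]
    constructor
    · intro h; exact ⟨⟨i, h⟩, rfl⟩
    · rintro ⟨j, rfl⟩; exact j.2
  rw [h3, Finset.prod_image (fun i _ j _ h => Fin.castLE_injective hnm h)]
  have h4 : ∀ j : Fin n, (if h : ((Fin.castLE hnm j : Fin m) : ℕ) < n
      then M (τ (Fin.castLE hnm j)) ⟨(Fin.castLE hnm j : Fin m), h⟩ else 0)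
      = M (τ (Fin.castLE hnm j)) j := by
    intro j
    rw [dif_pos (by simpa using j.2)]
    congr 1
  simp only [h4, Units.smul_def, zsmul_eq_mul]
  push_cast
  ring

/-- Equiv from `Fin n` to the subtype of `Fin m` with value `< n`. -/
private def embn {m n : ℕ} (hnm : n ≤ m) : Fin n ≃ {i : Fin m // (i : ℕ) < n} where
  toFun j := ⟨Fin.castLE hnm j, by simpa using j.2⟩
  invFun i := ⟨(i : Fin m), i.2⟩
  left_inv j := by ext; simp
  right_inv i := by ext; simp

private lemma det_perm_cols {m n : ℕ} (hnm : n ≤ m) (c : Fin m → Fin m → ℝ)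
    (M : Fin m → Fin n → ℝ) (π : Equiv.Perm (Fin n)) :
    Matrix.det (Matrix.of fun i j : Fin m =>
        if h : (j : ℕ) < n then M i (π ⟨j, h⟩) else c i j)
      = ((Equiv.Perm.sign π : ℤ) : ℝ) * Matrix.det (Matrix.of fun i j : Fin m =>
          if h : (j : ℕ) < n then M i ⟨j, h⟩ else c i j) := by
  classical
  set π' : Equiv.Perm (Fin m) := π.extendDomain (embn hnm) with hπ'
  have hmat : (Matrix.of fun i j : Fin m =>
      if h : (j : ℕ) < n then M i (π ⟨j, h⟩) else c i j)
      = (Matrix.of fun i j : Fin m =>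
          if h : (j : ℕ) < n then M i ⟨j, h⟩ else c i j).submatrix id π' := by
    ext i j
    rw [Matrix.submatrix_apply]
    by_cases h : (j : ℕ) < n
    · have key0 := Equiv.Perm.extendDomain_apply_subtype (f := embn hnm) π (b := j) h
      have hsymm : (embn hnm).symm ⟨j, h⟩ = (⟨(j : ℕ), h⟩ : Fin n) := rfl
      have key : π' j = Fin.castLE hnm (π ⟨(j : ℕ), h⟩) := by
        rw [hπ', key0, hsymm]; rfl
      rw [Matrix.of_apply, Matrix.of_apply, dif_pos h, key,
        dif_pos (show ((Fin.castLE hnm (π ⟨(j : ℕ), h⟩) : Fin m) : ℕ) < n by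
          simpa using (π ⟨(j : ℕ), h⟩).2)]
      simp only [id_eq]
      congr 1
    · have key : π' j = j := Equiv.Perm.extendDomain_apply_not_subtype _ _ h
      rw [Matrix.of_apply, Matrix.of_apply, dif_neg h, key, dif_neg h]
      rfl
  rw [hmat, Matrix.det_permute', hπ', Equiv.Perm.sign_extendDomain]

section cube

variable {n : ℕ} {S : Set ℝ}

private lemma cube_measurable (hS : MeasurableSet S) :
    MeasurableSet {x : Fin n → ℝ | ∀ i, x i ∈ S} := by
  have : {x : Fin n → ℝ | ∀ i, x i ∈ S} = Set.pi Set.univ fun _ => S := by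
    ext x; simp [Set.mem_pi]
  rw [this]
  exact MeasurableSet.univ_pi fun _ => hS

private lemma indicator_cube_prod (h : Fin n → ℝ → ℝ) :
    Set.indicator {x : Fin n → ℝ | ∀ i, x i ∈ S} (fun x => ∏ j, h j (x j))
      = fun x => ∏ j, S.indicator (h j) (x j) := by
  funext x
  by_cases hx : ∀ i, x i ∈ S
  · rw [Set.indicator_of_mem (show x ∈ {x : Fin n → ℝ | ∀ i, x i ∈ S} from hx)]
    exact Finset.prod_congr rfl fun j _ => (Set.indicator_of_mem (hx j) _).symm
  · rw [Set.indicator_of_notMem (show x ∉ {x : Fin n → ℝ | ∀ i, x i ∈ S} from hx)]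
    push_neg at hx
    obtain ⟨i, hi⟩ := hx
    exact (Finset.prod_eq_zero (Finset.mem_univ i) (Set.indicator_of_notMem hi _)).symm

private lemma integrable_cube_prod (hS : MeasurableSet S) {h : Fin n → ℝ → ℝ}
    (hh : ∀ j, IntegrableOn (h j) S) :
    IntegrableOn (fun x => ∏ j, h j (x j)) {x : Fin n → ℝ | ∀ i, x i ∈ S} := by
  rw [← integrable_indicator_iff (cube_measurable hS), indicator_cube_prod]
  exact Integrable.fintype_prod fun j => (hh j).integrable_indicator hS

private lemma integral_cube_prod (hS : MeasurableSet S) (h : Fin n → ℝ → ℝ) :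
    ∫ x in {x : Fin n → ℝ | ∀ i, x i ∈ S}, ∏ j, h j (x j) = ∏ j, ∫ t in S, h j t := by
  rw [← integral_indicator (cube_measurable hS), indicator_cube_prod]
  rw [MeasureTheory.integral_fintype_prod_volume_eq_prod (f := fun j => S.indicator (h j))]
  exact Finset.prod_congr rfl fun j _ => integral_indicator hS

end cube

private lemma volume_eq_coords_zero {n : ℕ} (i j : Fin n) (hij : i ≠ j) :
    (volume : Measure (Fin n → ℝ)) {x : Fin n → ℝ | x i = x j} = 0 := by
  set K : Submodule ℝ (Fin n → ℝ) :=
    LinearMap.ker ((LinearMap.proj i : (Fin n → ℝ) →ₗ[ℝ] ℝ) - LinearMap.proj j) with hK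
  have hset : {x : Fin n → ℝ | x i = x j} = (K : Set (Fin n → ℝ)) := by
    ext x
    simp [hK, LinearMap.mem_ker, sub_eq_zero, LinearMap.sub_apply]
  have hKt : K ≠ ⊤ := by
    intro h
    have : Pi.single i (1 : ℝ) ∈ K := h ▸ Submodule.mem_top
    rw [hK, LinearMap.mem_ker] at this
    simp [LinearMap.sub_apply, Pi.single_apply, hij, hij.symm] at this
  rw [hset]
  exact Measure.addHaar_submodule _ K hKt

private lemma volume_diag_zero {n : ℕ} :
    (volume : Measure (Fin n → ℝ)) {x : Fin n → ℝ | ∃ i j, i ≠ j ∧ x i = x j} = 0 := by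
  have hsub : {x : Fin n → ℝ | ∃ i j, i ≠ j ∧ x i = x j}
      ⊆ ⋃ i : Fin n, ⋃ j : Fin n, {x : Fin n → ℝ | i ≠ j ∧ x i = x j} := by
    rintro x ⟨i, j, hij, hx⟩
    exact Set.mem_iUnion.2 ⟨i, Set.mem_iUnion.2 ⟨j, hij, hx⟩⟩
  refine measure_mono_null hsub (measure_iUnion_null fun i => measure_iUnion_null fun j => ?_)
  by_cases hij : i = j
  · simp [hij]
  · exact measure_mono_null (fun x hx => hx.2) (volume_eq_coords_zero i j hij)

private lemma exists_sort_perm {n : ℕ} (x : Fin n → ℝ) (hx : Function.Injective x) :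
    ∃ π : Equiv.Perm (Fin n), StrictAnti (x ∘ π) := by
  classical
  refine ⟨(Fin.revPerm).trans (Tuple.sort x), fun k l hkl => ?_⟩
  have hmono := Tuple.monotone_sort x
  have h1 : Fin.rev l < Fin.rev k := by
    simpa using Fin.rev_lt_rev.2 hkl
  have h2 : x ((Tuple.sort x) (Fin.rev l)) ≤ x ((Tuple.sort x) (Fin.rev k)) :=
    hmono h1.le
  have h3 : x ((Tuple.sort x) (Fin.rev l)) ≠ x ((Tuple.sort x) (Fin.rev k)) := by
    intro h
    exact absurd ((Equiv.injective _) (hx h)) h1.ne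
  exact lt_of_le_of_ne h2 h3

private lemma strictMono_perm_eq_refl {n : ℕ} (ψ : Equiv.Perm (Fin n))
    (hψ : StrictMono ψ) : ∀ k, ψ k = k := by
  have hsymm : StrictMono ψ.symm := fun a b hab => by
    rw [← hψ.lt_iff_lt, Equiv.apply_symm_apply, Equiv.apply_symm_apply]; exact hab
  intro k
  have i1 : WellFoundedLT (Fin n) := inferInstance
  have h1 : k ≤ ψ k := @StrictMono.le_apply (Fin n) _ i1 _ hψ k
  have h2 : k ≤ ψ.symm k := @StrictMono.le_apply (Fin n) _ i1 _ hsymm k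
  have h3 : ψ k ≤ ψ (ψ.symm k) := hψ.monotone h2
  rw [Equiv.apply_symm_apply] at h3
  exact le_antisymm h3 h1

private lemma sort_unique {n : ℕ} (x : Fin n → ℝ) (π π' : Equiv.Perm (Fin n))
    (h : StrictAnti (x ∘ π)) (h' : StrictAnti (x ∘ π')) : π = π' := by
  set ψ : Equiv.Perm (Fin n) := π'.trans π.symm with hψdef
  have hcomp : ∀ k, (x ∘ π) (ψ k) = (x ∘ π') k := by
    intro k; simp [hψdef, Function.comp]
  have hψ : StrictMono ψ := by
    intro k l hkl
    by_contra hc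
    push_neg at hc
    have h4 : (x ∘ π) (ψ k) ≤ (x ∘ π) (ψ l) := h.antitone hc
    rw [hcomp, hcomp] at h4
    exact absurd h4 (not_le.2 (h' hkl))
  have := strictMono_perm_eq_refl ψ hψ
  refine Equiv.ext fun k => ?_
  have hk := this k
  rw [hψdef] at hk
  have : π' k = π (π.symm (π' k)) := (Equiv.apply_symm_apply _ _).symm
  rw [show π.symm (π' k) = k from hk] at this
  exact this.symm

private lemma strictAnti_set_measurable {n : ℕ} (π : Equiv.Perm (Fin n)) :
    MeasurableSet {x : Fin n → ℝ | StrictAnti (x ∘ π)} := by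
  have : {x : Fin n → ℝ | StrictAnti (x ∘ π)}
      = ⋂ k : Fin n, ⋂ l : Fin n, {x : Fin n → ℝ | k < l → x (π l) < x (π k)} := by
    ext x
    simp only [Set.mem_iInter, Set.mem_setOf_eq]
    exact ⟨fun hs k l hkl => hs hkl, fun hs k l hkl => hs k l hkl⟩
  rw [this]
  refine MeasurableSet.iInter fun k => MeasurableSet.iInter fun l => ?_
  by_cases hkl : k < l
  · simp only [hkl, forall_true_left]
    exact measurableSet_lt (measurable_pi_apply _) (measurable_pi_apply _)
  · simp only [hkl]
    simp


/-- **Lemma 1** (integral formula for products of determinants). The integral of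
`det A(x) · det B(x)` over the ordered region `a ≤ x_n ≤ … ≤ x_1 < b` equals `det E`,
where the first `n` columns of `E` contain the integrals `∫_a^b f_i g_j` and the remaining
columns the constants `c_{ij}`. -/
theorem integral_det_mul_det
    (a b : ℝ) (hab : a < b) (m n : ℕ) (hn : 1 ≤ n) (hnm : n ≤ m)
    (f : Fin m → ℝ → ℝ) (g : Fin n → ℝ → ℝ)
    (hf : ∀ i, IntegrableOn (f i) (Set.Ico a b))
    (hg : ∀ j, IntegrableOn (g j) (Set.Ico a b))
    (hfg : ∀ i j, IntegrableOn (fun x => f i x * g j x) (Set.Ico a b))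
    (c : Fin m → Fin m → ℝ) :
    (∫ x in {x : Fin n → ℝ | Antitone x ∧ ∀ i, x i ∈ Set.Ico a b},
        Matrix.det (Matrix.of fun i j : Fin m =>
          if h : (j : ℕ) < n then f i (x ⟨j, h⟩) else c i j)
        * Matrix.det (Matrix.of fun i j : Fin n => g i (x j)))
      = Matrix.det (Matrix.of fun i j : Fin m =>
          if h : (j : ℕ) < n then ∫ y in Set.Ico a b, f i y * g ⟨j, h⟩ y else c i j) := by
  classical
  set S : Set ℝ := Set.Ico a b with hSdef
  have hSm : MeasurableSet S := measurableSet_Ico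
  set detA : (Fin n → ℝ) → ℝ := fun x => Matrix.det (Matrix.of fun i j : Fin m =>
      if h : (j : ℕ) < n then f i (x ⟨j, h⟩) else c i j) with hdetA
  set detB : (Fin n → ℝ) → ℝ := fun x =>
      Matrix.det (Matrix.of fun i j : Fin n => g i (x j)) with hdetB
  set F : (Fin n → ℝ) → ℝ := fun x => detA x * detB x with hFdef
  set Cube : Set (Fin n → ℝ) := {x | ∀ i, x i ∈ S} with hCube
  set Tset : Equiv.Perm (Fin n) → Set (Fin n → ℝ) :=
    fun π => {x | StrictAnti (x ∘ ⇑π) ∧ ∀ i, x i ∈ S} with hTset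
  set Dset : Set (Fin n → ℝ) := {x | ∃ i j, i ≠ j ∧ x i = x j} with hDset
  set w : Equiv.Perm (Fin m) → Equiv.Perm (Fin n) → ℝ := fun τ σ =>
    ((Equiv.Perm.sign τ : ℤ) : ℝ)
      * (∏ i ∈ Finset.univ.filter (fun i : Fin m => ¬ (i : ℕ) < n), c (τ i) i)
      * ((Equiv.Perm.sign σ : ℤ) : ℝ) with hw
  set hh : Equiv.Perm (Fin m) → Equiv.Perm (Fin n) → Fin n → ℝ → ℝ := fun τ σ j t =>
    f (τ (Fin.castLE hnm j)) t * g (σ j) t with hhdef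
  -- pointwise Leibniz expansion
  have hFexp : ∀ x : Fin n → ℝ, F x
      = ∑ τ : Equiv.Perm (Fin m), ∑ σ : Equiv.Perm (Fin n),
          w τ σ * ∏ j : Fin n, hh τ σ j (x j) := by
    intro x
    have e1 : detA x = ∑ τ : Equiv.Perm (Fin m), ((Equiv.Perm.sign τ : ℤ) : ℝ)
        * (∏ i ∈ Finset.univ.filter (fun i : Fin m => ¬ (i : ℕ) < n), c (τ i) i)
        * ∏ j : Fin n, f (τ (Fin.castLE hnm j)) (x j) :=
      det_expand hnm c (fun i jn => f i (x jn))
    have e2 : detB x = ∑ σ : Equiv.Perm (Fin n), ((Equiv.Perm.sign σ : ℤ) : ℝ)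
        * ∏ j : Fin n, g (σ j) (x j) := by
      rw [hdetB]
      simp only [Matrix.det_apply, Matrix.of_apply, Units.smul_def, zsmul_eq_mul]
    rw [show F x = detA x * detB x from rfl, e1, e2, Finset.sum_mul_sum]
    refine Finset.sum_congr rfl fun τ _ => Finset.sum_congr rfl fun σ _ => ?_
    rw [hw, hhdef]
    simp only
    rw [Finset.prod_mul_distrib]
    ring
  -- symmetry of F
  have hsym : ∀ (π : Equiv.Perm (Fin n)) (x : Fin n → ℝ), F (x ∘ ⇑π) = F x := by
    intro π x
    have e1 : detA (x ∘ ⇑π) = ((Equiv.Perm.sign π : ℤ) : ℝ) * detA x :=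
      det_perm_cols hnm c (fun i jn => f i (x jn)) π
    have e2 : detB (x ∘ ⇑π) = ((Equiv.Perm.sign π : ℤ) : ℝ) * detB x := by
      have hm : (Matrix.of fun i j : Fin n => g i ((x ∘ ⇑π) j))
          = (Matrix.of fun i j : Fin n => g i (x j)).submatrix id ⇑π := rfl
      show Matrix.det (Matrix.of fun i j : Fin n => g i ((x ∘ ⇑π) j)) = _
      rw [hm, Matrix.det_permute']
    have hs : ((Equiv.Perm.sign π : ℤ) : ℝ) * ((Equiv.Perm.sign π : ℤ) : ℝ) = 1 := by
      have h1 := Int.units_mul_self (Equiv.Perm.sign π)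
      have h2 : ((Equiv.Perm.sign π : ℤ)) * ((Equiv.Perm.sign π : ℤ)) = 1 := by
        rw [← Units.val_mul, h1]; rfl
      exact_mod_cast h2
    show detA (x ∘ ⇑π) * detB (x ∘ ⇑π) = detA x * detB x
    rw [e1, e2]
    linear_combination (detA x * detB x) * hs
  -- integrability on the cube
  have hterm : ∀ τ σ, IntegrableOn (fun x : Fin n → ℝ =>
      w τ σ * ∏ j : Fin n, hh τ σ j (x j)) Cube := by
    intro τ σ
    exact (integrable_cube_prod hSm fun j => hfg _ _).const_mul _
  have hFint : IntegrableOn F Cube := by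
    rw [show F = fun x => ∑ τ : Equiv.Perm (Fin m), ∑ σ : Equiv.Perm (Fin n),
        w τ σ * ∏ j : Fin n, hh τ σ j (x j) from funext hFexp]
    exact integrable_finset_sum _ fun τ _ => integrable_finset_sum _ fun σ _ => hterm τ σ
  -- the integral over the cube
  have hcube : ∫ x in Cube, F x = ((Nat.factorial n : ℕ) : ℝ) * Matrix.det (Matrix.of fun i j : Fin m =>
      if h : (j : ℕ) < n then ∫ y in S, f i y * g ⟨j, h⟩ y else c i j) := by
    have hs2 : ∀ σ : Equiv.Perm (Fin n),
        ((Equiv.Perm.sign σ : ℤ) : ℝ) * ((Equiv.Perm.sign σ : ℤ) : ℝ) = 1 := by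
      intro σ
      have h1 := Int.units_mul_self (Equiv.Perm.sign σ)
      have h2 : ((Equiv.Perm.sign σ : ℤ)) * ((Equiv.Perm.sign σ : ℤ)) = 1 := by
        rw [← Units.val_mul, h1]; rfl
      exact_mod_cast h2
    calc ∫ x in Cube, F x
        = ∑ τ : Equiv.Perm (Fin m), ∑ σ : Equiv.Perm (Fin n),
            w τ σ * ∏ j : Fin n, ∫ t in S, hh τ σ j t := by
          rw [show F = fun x => ∑ τ : Equiv.Perm (Fin m), ∑ σ : Equiv.Perm (Fin n),
              w τ σ * ∏ j : Fin n, hh τ σ j (x j) from funext hFexp]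
          rw [integral_finset_sum _ (fun τ _ => integrable_finset_sum _ fun σ _ => hterm τ σ)]
          refine Finset.sum_congr rfl fun τ _ => ?_
          rw [integral_finset_sum _ (fun σ _ => hterm τ σ)]
          refine Finset.sum_congr rfl fun σ _ => ?_
          rw [MeasureTheory.integral_const_mul, integral_cube_prod hSm (hh τ σ)]
      _ = ∑ σ : Equiv.Perm (Fin n), ((Equiv.Perm.sign σ : ℤ) : ℝ)
            * Matrix.det (Matrix.of fun i j : Fin m =>
                if h : (j : ℕ) < n then ∫ t in S, f i t * g (σ ⟨j, h⟩) t else c i j) := by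
          rw [Finset.sum_comm]
          refine Finset.sum_congr rfl fun σ _ => ?_
          rw [det_expand hnm c (fun i jn => ∫ t in S, f i t * g (σ jn) t), Finset.mul_sum]
          refine Finset.sum_congr rfl fun τ _ => ?_
          rw [hw, hhdef]
          simp only
          ring
      _ = ∑ _σ : Equiv.Perm (Fin n), Matrix.det (Matrix.of fun i j : Fin m =>
            if h : (j : ℕ) < n then ∫ y in S, f i y * g ⟨j, h⟩ y else c i j) := by
          refine Finset.sum_congr rfl fun σ _ => ?_
          rw [det_perm_cols hnm c (fun i jn => ∫ t in S, f i t * g jn t) σ, ← mul_assoc,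
            hs2 σ, one_mul]
      _ = ((Nat.factorial n : ℕ) : ℝ) * Matrix.det (Matrix.of fun i j : Fin m =>
            if h : (j : ℕ) < n then ∫ y in S, f i y * g ⟨j, h⟩ y else c i j) := by
          rw [Finset.sum_const, Finset.card_univ, Fintype.card_perm, Fintype.card_fin,
            nsmul_eq_mul]
  -- decomposition of cube into sorted regions
  have hTmeas : ∀ π, MeasurableSet (Tset π) := fun π =>
    (strictAnti_set_measurable π).inter (cube_measurable hSm)
  have hTsub : ∀ π, Tset π ⊆ Cube := fun π x hx => hx.2
  have hUnion : ∫ x in Cube, F x = ∑ π : Equiv.Perm (Fin n), ∫ x in Tset π, F x := by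
    have hae : Cube =ᵐ[(volume : Measure (Fin n → ℝ))]
        ⋃ π ∈ (Finset.univ : Finset (Equiv.Perm (Fin n))), Tset π := by
      rw [MeasureTheory.ae_eq_set]
      constructor
      · refine measure_mono_null ?_ volume_diag_zero
        rintro x ⟨hxc, hxu⟩
        by_contra hxd
        have hinj : Function.Injective x := by
          intro i j hij
          by_contra hne
          exact hxd ⟨i, j, hne, hij⟩
        obtain ⟨π, hπ⟩ := exists_sort_perm x hinj
        exact (hxu (Set.mem_biUnion (Finset.mem_univ π) ⟨hπ, hxc⟩)).elim
      · have hsub : (⋃ π ∈ (Finset.univ : Finset (Equiv.Perm (Fin n))), Tset π) \ Cube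
            ⊆ (∅ : Set (Fin n → ℝ)) := by
          rintro x ⟨hxu, hxc⟩
          obtain ⟨π, -, hπ⟩ := Set.mem_iUnion₂.1 hxu
          exact (hxc hπ.2).elim
        exact measure_mono_null hsub (by simp)
    rw [setIntegral_congr_set hae]
    refine integral_biUnion_finset Finset.univ (fun π _ => hTmeas π) ?_
      (fun π _ => hFint.mono_set (hTsub π))
    intro π _ π' _ hne
    refine Set.disjoint_left.2 fun x hx hx' => hne ?_
    exact sort_unique x π π' hx.1 hx'.1
  have hchange : ∀ π : Equiv.Perm (Fin n), ∫ x in Tset π, F x = ∫ x in Tset 1, F x := by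
    intro π
    have MP := MeasureTheory.volume_measurePreserving_piCongrLeft (fun _ : Fin n => ℝ) π.symm
    set e := MeasurableEquiv.piCongrLeft (fun _ : Fin n => ℝ) π.symm with hedef
    have he : ∀ x : Fin n → ℝ, e x = x ∘ ⇑π := by
      intro x
      funext i
      have h0 := Equiv.piCongrLeft_apply_apply (fun _ : Fin n => ℝ) π.symm x (π i)
      rw [Equiv.symm_apply_apply] at h0
      simpa [hedef, MeasurableEquiv.coe_piCongrLeft] using h0
    have hpre : ⇑e ⁻¹' (Tset 1) = Tset π := by
      ext x
      simp only [Set.mem_preimage, hTset, Set.mem_setOf_eq, he x]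
      constructor
      · rintro ⟨h1, h2⟩
        refine ⟨by simpa using h1, fun i => ?_⟩
        have := h2 (π.symm i)
        simpa using this
      · rintro ⟨h1, h2⟩
        exact ⟨by simpa using h1, fun i => h2 (π i)⟩
    have key := MP.setIntegral_preimage_emb (MeasurableEquiv.measurableEmbedding e) F (Tset 1)
    rw [hpre] at key
    rw [← key]
    refine integral_congr_ae (Filter.Eventually.of_forall fun x => ?_)
    show F x = F (e x)
    rw [he x, hsym π x]
  have hT1 : ∫ x in Tset 1, F x
      = ∫ x in {x : Fin n → ℝ | Antitone x ∧ ∀ i, x i ∈ S}, F x := by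
    apply setIntegral_congr_set
    rw [MeasureTheory.ae_eq_set]
    constructor
    · have hsub : Tset 1 \ {x : Fin n → ℝ | Antitone x ∧ ∀ i, x i ∈ S}
          ⊆ (∅ : Set (Fin n → ℝ)) := by
        rintro x ⟨⟨h1, h2⟩, hnot⟩
        exact (hnot ⟨(show StrictAnti x by simpa using h1).antitone, h2⟩).elim
      exact measure_mono_null hsub (by simp)
    · refine measure_mono_null ?_ volume_diag_zero
      rintro x ⟨⟨hmono, hxc⟩, hnot⟩
      have hnsa : ¬ StrictAnti x := by
        intro hsa
        exact hnot ⟨by simpa using hsa, hxc⟩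
      simp only [StrictAnti] at hnsa
      push_neg at hnsa
      obtain ⟨i, j, hij, hle⟩ := hnsa
      exact ⟨i, j, hij.ne, le_antisymm hle (hmono hij.le)⟩
  have hcard : ∑ π : Equiv.Perm (Fin n), ∫ x in Tset π, F x
      = ((Nat.factorial n : ℕ) : ℝ) * ∫ x in Tset 1, F x := by
    rw [Finset.sum_congr rfl fun π _ => hchange π, Finset.sum_const, Finset.card_univ,
      Fintype.card_perm, Fintype.card_fin, nsmul_eq_mul]
  have hne : ((Nat.factorial n : ℕ) : ℝ) ≠ 0 := Nat.cast_ne_zero.2 (Nat.factorial_ne_zero n)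
  apply mul_left_cancel₀ hne
  rw [← hcube, hUnion, hcard, hT1]
end

section
/- Limit of a determinant divided by a Vandermonde determinant under eigenvalue coalescence (Lemma 2). Let m > n ≥ 1 be integers and let a_1 > a_2 > … > a_n be fixed reals. Let f_1,…,f_m be real functions that are (m−n−1)-times continuously differentiable on a neighborhood of a real point a_0 with a_0 < a_n, and defined at a_1,…,a_n. For a decreasing tuple a_1 > … > a_n > a_{n+1} > … > a_m, let A = diag(a_1,…,a_m) and let C be the m×m matrix with C_{ij} = f_i(a_j). Let E be the m×m matrix with E_{ij} = f_i(a_j) for 1 ≤ j ≤ n and E_{ij} = f_i^{(m−j)}(a_0) for n+1 ≤ j ≤ m, where f^{(k)} denotes the k-th derivative. Then, as (a_{n+1},…,a_m) → (a_0,…,a_0) within the region a_n > a_{n+1} > … > a_m, the ratio det C / Δ(A) converges to det E / ( Γ_{m−n}·κ(A_0 − a_0 I_n, m−n) ), where A_0 := diag(a_1,…,a_n). -/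
open MeasureTheory Matrix BigOperators Finset Filter Topology

noncomputable section

/-- `Γ_n = ∏_{i=1}^n Γ(i)` (with `Γ_0 = 1`). -/
def Gs (n : ℕ) : ℝ := ∏ i ∈ Finset.range n, Real.Gamma (i + 1)

/-- The Vandermonde product `Δ` of a tuple. -/
def vdm {n : ℕ} (a : Fin n → ℝ) : ℝ :=
  ∏ p ∈ Finset.univ.filter (fun p : Fin n × Fin n => p.1 < p.2), (a p.1 - a p.2)

/-- `κ(A, k) = Δ(A) · det(A)^k`, via the tuple of diagonal entries/eigenvalues of `A`. -/
def kap {n : ℕ} (a : Fin n → ℝ) (k : ℕ) : ℝ := vdm a * (∏ i, a i) ^ k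

/-- Concatenation of the fixed head `a : Fin n → ℝ` and the tail `b : Fin (m−n) → ℝ`
into a full tuple `Fin m → ℝ`. -/
def joinTup (n m : ℕ) (a : Fin n → ℝ) (b : Fin (m - n) → ℝ) : Fin m → ℝ :=
  fun i => if h : (i : ℕ) < n then a ⟨i, h⟩
    else b ⟨(i : ℕ) - n, by have := i.isLt; omega⟩

namespace DVA

open Polynomial



lemma iterDeriv_polyEval (k : ℕ) (p : ℝ[X]) :
    iteratedDeriv k (fun y => p.eval y) = fun x => (derivative^[k] p).eval x := by
  induction k generalizing p with
  | zero => simp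
  | succ k ih =>
    rw [iteratedDeriv_succ']
    have h : deriv (fun y => p.eval y) = fun y => (derivative p).eval y := by
      funext y; exact Polynomial.deriv (p := p)
    rw [h, ih, Function.iterate_succ_apply]

lemma iterDerivWithin_isOpen {s : Set ℝ} (hs : IsOpen s) {x : ℝ} (hx : x ∈ s) (k : ℕ)
    (f : ℝ → ℝ) : iteratedDerivWithin k f s x = iteratedDeriv k f x := by
  rw [iteratedDerivWithin_eq_iteratedFDerivWithin, iteratedDeriv_eq_iteratedFDeriv,
    iteratedFDerivWithin_of_isOpen k hs hx]

lemma iterated_rolle : ∀ (k : ℕ) (g : ℝ → ℝ) (lo hi : ℝ),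
    ContDiffOn ℝ k g (Set.Ioo lo hi) →
    ∀ t : Fin (k+1) → ℝ, StrictAnti t → (∀ r, t r ∈ Set.Ioo lo hi) →
    (∀ r, g (t r) = 0) → ∃ ξ ∈ Set.Ioo lo hi, iteratedDeriv k g ξ = 0 := by
  intro k
  induction k with
  | zero =>
    intro g lo hi _ t _ hmem hz
    exact ⟨t 0, hmem 0, by simpa [iteratedDeriv_zero] using hz 0⟩
  | succ k ih =>
    intro g lo hi hg t ht hmem hz
    have key : ∀ r : Fin (k+1), ∃ ξ ∈ Set.Ioo (t r.succ) (t r.castSucc), deriv g ξ = 0 := by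
      intro r
      have hlt : t r.succ < t r.castSucc := ht (Fin.castSucc_lt_succ (i := r))
      have hsub : Set.Icc (t r.succ) (t r.castSucc) ⊆ Set.Ioo lo hi := by
        intro x hx
        exact ⟨lt_of_lt_of_le (hmem r.succ).1 hx.1, lt_of_le_of_lt hx.2 (hmem r.castSucc).2⟩
      have hcont : ContinuousOn g (Set.Icc (t r.succ) (t r.castSucc)) :=
        (hg.continuousOn).mono hsub
      exact exists_deriv_eq_zero hlt hcont (by rw [hz, hz])
    choose u hu hu0 using key
    have hu_anti : StrictAnti u := by
      intro r r' hrr'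
      have h1 : r.succ ≤ r'.castSucc := by
        rw [Fin.le_def]
        simpa using hrr'
      calc u r' < t r'.castSucc := (hu r').2
        _ ≤ t r.succ := ht.antitone h1
        _ < u r := (hu r).1
    have humem : ∀ r, u r ∈ Set.Ioo lo hi := by
      intro r
      exact ⟨lt_trans (hmem r.succ).1 (hu r).1, lt_trans (hu r).2 (hmem r.castSucc).2⟩
    have hg' : ContDiffOn ℝ k (deriv g) (Set.Ioo lo hi) := by
      apply hg.deriv_of_isOpen isOpen_Ioo
      exact_mod_cast le_refl ((k : WithTop ℕ∞) + 1)
    obtain ⟨ξ, hξ, hξ0⟩ := ih (deriv g) lo hi hg' u hu_anti humem hu0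
    exact ⟨ξ, hξ, by rw [iteratedDeriv_succ']; exact hξ0⟩



/-- Divided difference of `f` at nodes `v r`, `r ∈ T`. -/
def ddF {ι : Type*} [DecidableEq ι] (f : ℝ → ℝ) (T : Finset ι) (v : ι → ℝ) : ℝ :=
  ∑ r ∈ T, f (v r) * (∏ l ∈ T.erase r, (v r - v l))⁻¹

lemma coeff_basis {ι : Type*} [DecidableEq ι] (T : Finset ι) (v : ι → ℝ) (i : ι) (hi : i ∈ T)
    (k : ℕ) (hT : T.card = k + 1) :
    (Lagrange.basis T v i).coeff k = (∏ l ∈ T.erase i, (v i - v l))⁻¹ := by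
  unfold Lagrange.basis Lagrange.basisDivisor
  rw [Finset.prod_mul_distrib, ← map_prod C (fun j => (v i - v j)⁻¹) (T.erase i),
    Polynomial.coeff_C_mul]
  have hcard : (T.erase i).card = k := by
    rw [Finset.card_erase_of_mem hi, hT]; rfl
  have hmonic : (∏ j ∈ T.erase i, (X - C (v j))).Monic :=
    monic_prod_of_monic _ _ (fun j _ => monic_X_sub_C (v j))
  have hdeg : (∏ j ∈ T.erase i, (X - C (v j))).natDegree = k := by
    rw [Polynomial.natDegree_prod _ _ (fun j _ => X_sub_C_ne_zero (v j))]
    simp [Polynomial.natDegree_X_sub_C, hcard]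
  rw [show k = (∏ j ∈ T.erase i, (X - C (v j))).natDegree from hdeg.symm,
    hmonic.coeff_natDegree, mul_one, ← Finset.prod_inv_distrib]

lemma coeff_interpolate {ι : Type*} [DecidableEq ι] (T : Finset ι) (v : ι → ℝ) (r : ι → ℝ)
    (k : ℕ) (hT : T.card = k + 1) :
    (Lagrange.interpolate T v r).coeff k = ∑ i ∈ T, r i * (∏ l ∈ T.erase i, (v i - v l))⁻¹ := by
  rw [Lagrange.interpolate_apply, Polynomial.finset_sum_coeff]
  refine Finset.sum_congr rfl (fun i hi => ?_)
  rw [Polynomial.coeff_C_mul, coeff_basis T v i hi k hT]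

lemma iterate_derivative_of_degree_lt (p : ℝ[X]) (k : ℕ) (h : p.degree < (k + 1 : ℕ)) :
    derivative^[k] p = C ((k.factorial : ℝ) * p.coeff k) := by
  ext m
  rw [Polynomial.coeff_iterate_derivative, Polynomial.coeff_C]
  rcases Nat.eq_zero_or_pos m with hm | hm
  · subst hm
    simp [Nat.descFactorial_self, nsmul_eq_mul]
  · have hm' : m ≠ 0 := hm.ne'
    have : p.coeff (m + k) = 0 := by
      apply Polynomial.coeff_eq_zero_of_degree_lt
      have hle : (k + 1 : ℕ) ≤ m + k := by omega
      exact lt_of_lt_of_le h (by exact_mod_cast hle)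
    simp [this, hm']

lemma contDiff_polyEval (n : WithTop ℕ∞) (p : ℝ[X]) : ContDiff ℝ n fun x : ℝ => p.eval x := by
  have h : (fun x : ℝ => p.eval x)
      = fun x => ∑ i ∈ Finset.range (p.natDegree + 1), p.coeff i * x ^ i := by
    funext x; exact p.eval_eq_sum_range x
  rw [h]
  exact ContDiff.sum (fun i _ => (contDiff_const.mul ((contDiff_id).pow i)))

lemma ddF_mean_value {ι : Type*} [DecidableEq ι] [LinearOrder ι] {k : ℕ} {lo hi : ℝ} {f : ℝ → ℝ}
    (hC : ContDiffOn ℝ k f (Set.Ioo lo hi)) (T : Finset ι) (hT : T.card = k + 1)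
    (v : ι → ℝ) (hv : StrictAntiOn v ↑T) (hmem : ∀ r ∈ T, v r ∈ Set.Ioo lo hi) :
    ∃ ξ ∈ Set.Ioo lo hi, ddF f T v = iteratedDeriv k f ξ / k.factorial := by
  classical
  have hinj : Set.InjOn v ↑T := hv.injOn
  set p := Lagrange.interpolate T v (fun i => f (v i)) with hp
  set t : Fin (k+1) → ℝ := fun i => v ((T.orderIsoOfFin hT) i) with htdef
  have ht : StrictAnti t := by
    intro i j hij
    exact hv ((T.orderIsoOfFin hT) i).2 ((T.orderIsoOfFin hT) j).2
      (by exact_mod_cast (T.orderIsoOfFin hT).strictMono hij)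
  have htmem : ∀ i, t i ∈ Set.Ioo lo hi := fun i => hmem _ ((T.orderIsoOfFin hT) i).2
  set g : ℝ → ℝ := fun x => f x - p.eval x with hg
  have hpoly : ContDiff ℝ k (fun x : ℝ => p.eval x) := contDiff_polyEval _ p
  have hCg : ContDiffOn ℝ k g (Set.Ioo lo hi) := hC.sub hpoly.contDiffOn
  have hz : ∀ i, g (t i) = 0 := by
    intro i
    have h1 : p.eval (t i) = f (t i) :=
      Lagrange.eval_interpolate_at_node _ hinj ((T.orderIsoOfFin hT) i).2
    have h2 : g (t i) = f (t i) - p.eval (t i) := rfl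
    rw [h2, h1, sub_self]
  obtain ⟨ξ, hξ, hξ0⟩ := iterated_rolle k g lo hi hCg t ht htmem hz
  have hud : UniqueDiffOn ℝ (Set.Ioo lo hi) := isOpen_Ioo.uniqueDiffOn
  have hsplit : iteratedDeriv k g ξ = iteratedDeriv k f ξ - iteratedDeriv k (fun x => p.eval x) ξ := by
    have := iteratedDerivWithin_sub hξ hud (hC ξ hξ) (hpoly.contDiffOn ξ hξ) (f := f)
      (g := fun x => p.eval x)
    rw [iterDerivWithin_isOpen isOpen_Ioo hξ, iterDerivWithin_isOpen isOpen_Ioo hξ,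
      iterDerivWithin_isOpen isOpen_Ioo hξ] at this
    rw [← this]
    rfl
  have hdegp : p.degree < (k + 1 : ℕ) := by
    rw [hp]
    have := Lagrange.degree_interpolate_lt (fun i => f (v i)) hinj
    rwa [hT] at this
  have hcoeff : p.coeff k = ddF f T v := by
    rw [hp, coeff_interpolate T v _ k hT]; rfl
  have hfxi : iteratedDeriv k f ξ = (k.factorial : ℝ) * ddF f T v := by
    have h1 : iteratedDeriv k (fun x => p.eval x) ξ = (k.factorial : ℝ) * ddF f T v := by
      rw [iterDeriv_polyEval, iterate_derivative_of_degree_lt p k hdegp]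
      simp [hcoeff]
    have : iteratedDeriv k f ξ - iteratedDeriv k (fun x => p.eval x) ξ = 0 := by
      rw [← hsplit]; exact hξ0
    rw [sub_eq_zero] at this
    rw [this, h1]
  refine ⟨ξ, hξ, ?_⟩
  rw [hfxi]
  field_simp



lemma ddF_tendsto {q k : ℕ} (T : Finset (Fin q)) (hT : T.card = k + 1) {f : ℝ → ℝ} {a0 : ℝ}
    (hf : ContDiffAt ℝ k f a0) :
    Tendsto (fun b : Fin q → ℝ => ddF f T b)
      (𝓝[{b : Fin q → ℝ | StrictAnti b}] (fun _ => a0))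
      (𝓝 (iteratedDeriv k f a0 / k.factorial)) := by
  obtain ⟨u, hu, hCu⟩ := hf.contDiffOn (le_refl _) (by simp)
  obtain ⟨δ0, hδ0, hball⟩ := Metric.mem_nhds_iff.1 hu
  have hCb : ContDiffOn ℝ k f (Metric.ball a0 δ0) := hCu.mono hball
  have hcontn : ContinuousAt (iteratedDeriv k f) a0 := by
    have h1 : ContinuousOn (iteratedDerivWithin k f (Metric.ball a0 δ0)) (Metric.ball a0 δ0) :=
      hCb.continuousOn_iteratedDerivWithin (le_refl _) Metric.isOpen_ball.uniqueDiffOn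
    have h2 : ContinuousOn (iteratedDeriv k f) (Metric.ball a0 δ0) :=
      h1.congr (fun x hx => (iterDerivWithin_isOpen Metric.isOpen_ball hx k f).symm)
    exact h2.continuousAt (Metric.isOpen_ball.mem_nhds (Metric.mem_ball_self hδ0))
  rw [Metric.tendsto_nhds]
  intro ε hε
  have hkfac : (0:ℝ) < k.factorial := by positivity
  obtain ⟨δ1, hδ1, hcl⟩ := Metric.continuousAt_iff.1 hcontn (ε * k.factorial) (by positivity)
  set δ := min δ0 δ1 with hδdef
  have hδ : 0 < δ := lt_min hδ0 hδ1
  have hev : ∀ᶠ b : Fin q → ℝ in 𝓝[{b : Fin q → ℝ | StrictAnti b}] (fun _ => a0),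
      ∀ r : Fin q, b r ∈ Set.Ioo (a0 - δ) (a0 + δ) := by
    apply eventually_nhdsWithin_of_eventually_nhds
    rw [Filter.eventually_all]
    intro r
    have h3 : Tendsto (fun b : Fin q → ℝ => b r) (𝓝 (fun _ => a0)) (𝓝 a0) :=
      ((continuous_apply r).tendsto _)
    exact h3 (Ioo_mem_nhds (by linarith) (by linarith))
  filter_upwards [hev, self_mem_nhdsWithin] with b hb hbS
  have hsub : Set.Ioo (a0 - δ) (a0 + δ) ⊆ Metric.ball a0 δ0 := by
    intro x hx
    rw [Metric.mem_ball, Real.dist_eq, abs_lt]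
    constructor
    · have := hx.1; have : a0 - δ0 ≤ a0 - δ := by
        have := min_le_left δ0 δ1; linarith
      linarith [hx.1]
    · have := min_le_left δ0 δ1; linarith [hx.2]
  have hCI : ContDiffOn ℝ k f (Set.Ioo (a0 - δ) (a0 + δ)) := hCb.mono hsub
  obtain ⟨ξ, hξ, heq⟩ := ddF_mean_value hCI T hT b (hbS.strictAntiOn _) (fun r _ => hb r)
  show dist (ddF f T b) (iteratedDeriv k f a0 / k.factorial) < ε
  rw [heq, Real.dist_eq]
  have hξd : dist ξ a0 < δ1 := by
    rw [Real.dist_eq, abs_lt]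
    have := min_le_right δ0 δ1
    constructor <;> [linarith [hξ.1]; linarith [hξ.2]]
  have hlt : |iteratedDeriv k f ξ - iteratedDeriv k f a0| < ε * k.factorial := by
    have := hcl hξd
    rwa [Real.dist_eq] at this
  rw [div_sub_div_same, abs_div, abs_of_pos hkfac, div_lt_iff₀ hkfac]
  exact hlt




lemma vdm_pair {r : ℕ} (v : Fin r → ℝ) :
    vdm v = ∏ x : Fin r, ∏ y : Fin r, (if x < y then v x - v y else 1) := by
  rw [vdm, Finset.prod_filter, ← Fintype.prod_prod_type']

lemma vdm_pos {r : ℕ} {v : Fin r → ℝ} (hv : StrictAnti v) : 0 < vdm v := by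
  apply Finset.prod_pos
  intro p hp
  rw [Finset.mem_filter] at hp
  exact sub_pos.2 (hv hp.2)

/-- Column reduction of the determinant via divided differences. -/
lemma det_step {n q : ℕ} (F : Fin n ⊕ Fin q → ℝ → ℝ) (a : Fin n → ℝ) (b : Fin q → ℝ)
    (hb : StrictAnti b) :
    Matrix.det (Matrix.of fun i j : Fin n ⊕ Fin q => F i (Sum.elim a b j)) =
      Matrix.det (Matrix.of fun i j : Fin n ⊕ Fin q =>
        Sum.elim (fun i' => F i (a i'))
          (fun c => ddF (F i) (Finset.univ.filter (fun l => c ≤ l)) b) j) * vdm b := by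
  classical
  set W' : Matrix (Fin q) (Fin q) ℝ := Matrix.of fun r c =>
    if c ≤ r then (∏ l ∈ (Finset.univ.filter (fun l => c ≤ l)).erase r, (b r - b l))⁻¹ else 0
    with hW'
  have hdetW' : W'.det = (vdm b)⁻¹ := by
    have htri : W'.BlockTriangular OrderDual.toDual := by
      intro r c hrc
      have h1 : r < c := hrc
      show (if c ≤ r then _ else 0) = 0
      rw [if_neg (not_le.2 h1)]
    rw [Matrix.det_of_lowerTriangular _ htri]
    have hdiag : ∀ r : Fin q,
        W' r r = (∏ l ∈ Finset.univ.filter (fun l => r < l), (b r - b l))⁻¹ := by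
      intro r
      have herase : (Finset.univ.filter (fun l => r ≤ l)).erase r
          = Finset.univ.filter (fun l => r < l) := by
        ext l
        simp only [Finset.mem_erase, Finset.mem_filter, Finset.mem_univ, true_and]
        constructor
        · rintro ⟨h1, h2⟩; exact lt_of_le_of_ne h2 (Ne.symm h1)
        · intro h1; exact ⟨(ne_of_lt h1).symm, le_of_lt h1⟩
      show (if r ≤ r then _ else 0) = _
      rw [if_pos le_rfl, herase]
    calc ∏ r, W' r r
        = ∏ r, (∏ l ∈ Finset.univ.filter (fun l => r < l), (b r - b l))⁻¹ :=
          Finset.prod_congr rfl (fun r _ => hdiag r)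
      _ = (∏ r, ∏ l ∈ Finset.univ.filter (fun l => r < l), (b r - b l))⁻¹ := by
          rw [Finset.prod_inv_distrib]
      _ = (vdm b)⁻¹ := by
          rw [vdm_pair]
          congr 1
          exact Finset.prod_congr rfl (fun r _ => Finset.prod_filter _ _)
  have hmul : (Matrix.of fun i j : Fin n ⊕ Fin q => F i (Sum.elim a b j)) *
      Matrix.fromBlocks (1 : Matrix (Fin n) (Fin n) ℝ) 0 0 W' =
      Matrix.of (fun i j : Fin n ⊕ Fin q =>
        Sum.elim (fun i' => F i (a i'))
          (fun c => ddF (F i) (Finset.univ.filter (fun l => c ≤ l)) b) j) := by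
    ext i j
    rw [Matrix.mul_apply, Fintype.sum_sum_type]
    cases j with
    | inl j' =>
      have h1 : ∀ r : Fin q,
          (Matrix.of fun i j : Fin n ⊕ Fin q => F i (Sum.elim a b j)) i (Sum.inr r) *
            Matrix.fromBlocks (1 : Matrix (Fin n) (Fin n) ℝ) 0 0 W' (Sum.inr r) (Sum.inl j') = 0 := by
        intro r; simp [Matrix.fromBlocks_apply₂₁]
      rw [Finset.sum_congr rfl (fun r _ => h1 r), Finset.sum_const_zero, add_zero]
      have h2 : ∀ r' : Fin n,
          (Matrix.of fun i j : Fin n ⊕ Fin q => F i (Sum.elim a b j)) i (Sum.inl r') *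
            Matrix.fromBlocks (1 : Matrix (Fin n) (Fin n) ℝ) 0 0 W' (Sum.inl r') (Sum.inl j')
          = if r' = j' then F i (a r') else 0 := by
        intro r'
        simp [Matrix.fromBlocks_apply₁₁, Matrix.one_apply, mul_ite]
      rw [Finset.sum_congr rfl (fun r' _ => h2 r'), Finset.sum_ite_eq' Finset.univ j'
        (fun r' => F i (a r'))]
      simp
    | inr c =>
      have h1 : ∀ r' : Fin n,
          (Matrix.of fun i j : Fin n ⊕ Fin q => F i (Sum.elim a b j)) i (Sum.inl r') *
            Matrix.fromBlocks (1 : Matrix (Fin n) (Fin n) ℝ) 0 0 W' (Sum.inl r') (Sum.inr c) = 0 := by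
        intro r'; simp [Matrix.fromBlocks_apply₁₂]
      rw [Finset.sum_congr rfl (fun r' _ => h1 r'), Finset.sum_const_zero, zero_add]
      have h2 : ∀ r : Fin q,
          (Matrix.of fun i j : Fin n ⊕ Fin q => F i (Sum.elim a b j)) i (Sum.inr r) *
            Matrix.fromBlocks (1 : Matrix (Fin n) (Fin n) ℝ) 0 0 W' (Sum.inr r) (Sum.inr c)
          = if c ≤ r then F i (b r) *
              (∏ l ∈ (Finset.univ.filter (fun l => c ≤ l)).erase r, (b r - b l))⁻¹ else 0 := by
        intro r
        show F i (b r) * (if c ≤ r then _ else 0) = _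
        rw [mul_ite, mul_zero]
      rw [Finset.sum_congr rfl (fun r _ => h2 r), ← Finset.sum_filter]
      simp only [Matrix.of_apply, Sum.elim_inr]
      rfl
  have hvb : vdm b ≠ 0 := (vdm_pos hb).ne'
  have hdet := congrArg Matrix.det hmul
  rw [Matrix.det_mul, Matrix.det_fromBlocks_zero₂₁, Matrix.det_one, one_mul, hdetW'] at hdet
  rw [← hdet, inv_mul_cancel_right₀ hvb]


def sumEquiv (n q m : ℕ) (hq : n + q = m) : Fin n ⊕ Fin q ≃ Fin m :=
  finSumFinEquiv.trans (finCongr hq)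

lemma sumEquiv_inl_val {n q m : ℕ} (hq : n + q = m) (i : Fin n) :
    ((sumEquiv n q m hq (Sum.inl i)) : ℕ) = (i : ℕ) := by
  simp [sumEquiv, finCongr_apply]

lemma sumEquiv_inr_val {n q m : ℕ} (hq : n + q = m) (c : Fin q) :
    ((sumEquiv n q m hq (Sum.inr c)) : ℕ) = n + (c : ℕ) := by
  simp [sumEquiv, finCongr_apply]

lemma joinTup_comp {n m : ℕ} (hq : n + (m - n) = m) (a : Fin n → ℝ) (b : Fin (m - n) → ℝ) :
    ∀ j, joinTup n m a b (sumEquiv n (m - n) m hq j) = Sum.elim a b j := by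
  intro j
  cases j with
  | inl i =>
    simp only [joinTup, Sum.elim_inl]
    rw [dif_pos (show ((sumEquiv n (m-n) m hq (Sum.inl i)) : ℕ) < n by
      rw [sumEquiv_inl_val]; exact i.isLt)]
    exact congrArg a (Fin.ext (by rw [sumEquiv_inl_val]))
  | inr c =>
    simp only [joinTup, Sum.elim_inr]
    rw [dif_neg (show ¬ ((sumEquiv n (m-n) m hq (Sum.inr c)) : ℕ) < n by
      rw [sumEquiv_inr_val]; omega)]
    refine congrArg b (Fin.ext ?_)
    show ((sumEquiv n (m-n) m hq (Sum.inr c)) : ℕ) - n = (c : ℕ)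
    rw [sumEquiv_inr_val]
    omega

lemma vdm_join {n m : ℕ} (hq : n + (m - n) = m) (a : Fin n → ℝ) (b : Fin (m - n) → ℝ) :
    vdm (joinTup n m a b) = vdm a * (∏ i, ∏ c, (a i - b c)) * vdm b := by
  classical
  have hcomp := joinTup_comp hq a b
  set EE := sumEquiv n (m - n) m hq with hEE
  set jv := joinTup n m a b with hjv
  have hvl : ∀ i : Fin n, ((EE (Sum.inl i)) : ℕ) = (i : ℕ) := fun i => sumEquiv_inl_val hq i
  have hvr : ∀ c : Fin (m - n), ((EE (Sum.inr c)) : ℕ) = n + (c : ℕ) :=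
    fun c => sumEquiv_inr_val hq c
  have h1 : vdm jv = ∏ z : Fin n ⊕ Fin (m - n), ∏ w : Fin n ⊕ Fin (m - n),
      (if EE z < EE w then jv (EE z) - jv (EE w) else 1) := by
    rw [vdm_pair]
    exact (Fintype.prod_equiv EE
      (fun z => ∏ w : Fin n ⊕ Fin (m - n), (if EE z < EE w then jv (EE z) - jv (EE w) else 1))
      (fun x => ∏ y : Fin m, (if x < y then jv x - jv y else 1))
      (fun z => Fintype.prod_equiv EE
        (fun w => if EE z < EE w then jv (EE z) - jv (EE w) else 1)
        (fun y => if EE z < y then jv (EE z) - jv y else 1)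
        (fun w => rfl))).symm
  rw [h1, Fintype.prod_sum_type]
  simp only [Fintype.prod_sum_type]
  rw [Finset.prod_mul_distrib, Finset.prod_mul_distrib]
  have hA : (∏ i : Fin n, ∏ i' : Fin n,
      (if EE (Sum.inl i) < EE (Sum.inl i') then jv (EE (Sum.inl i)) - jv (EE (Sum.inl i')) else 1))
      = vdm a := by
    rw [vdm_pair a]
    refine Finset.prod_congr rfl fun i _ => Finset.prod_congr rfl fun i' _ => ?_
    rw [hcomp, hcomp]
    simp only [Sum.elim_inl]
    refine if_congr ?_ rfl rfl
    simp only [Fin.lt_def]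
    rw [hvl i, hvl i']
  have hB : (∏ i : Fin n, ∏ c : Fin (m - n),
      (if EE (Sum.inl i) < EE (Sum.inr c) then jv (EE (Sum.inl i)) - jv (EE (Sum.inr c)) else 1))
      = ∏ i, ∏ c, (a i - b c) := by
    refine Finset.prod_congr rfl fun i _ => Finset.prod_congr rfl fun c _ => ?_
    rw [hcomp, hcomp]
    simp only [Sum.elim_inl, Sum.elim_inr]
    rw [if_pos]
    show ((EE (Sum.inl i)) : ℕ) < ((EE (Sum.inr c)) : ℕ)
    rw [hvl i, hvr c]
    exact lt_of_lt_of_le i.isLt (Nat.le_add_right n c)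
  have hC : (∏ c : Fin (m - n), ∏ i' : Fin n,
      (if EE (Sum.inr c) < EE (Sum.inl i') then jv (EE (Sum.inr c)) - jv (EE (Sum.inl i')) else 1))
      = 1 := by
    refine Finset.prod_eq_one fun c _ => Finset.prod_eq_one fun i' _ => ?_
    rw [if_neg]
    show ¬ ((EE (Sum.inr c)) : ℕ) < ((EE (Sum.inl i')) : ℕ)
    rw [hvr c, hvl i']
    have := i'.isLt
    omega
  have hD : (∏ c : Fin (m - n), ∏ c' : Fin (m - n),
      (if EE (Sum.inr c) < EE (Sum.inr c') then jv (EE (Sum.inr c)) - jv (EE (Sum.inr c')) else 1))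
      = vdm b := by
    rw [vdm_pair b]
    refine Finset.prod_congr rfl fun c _ => Finset.prod_congr rfl fun c' _ => ?_
    rw [hcomp, hcomp]
    simp only [Sum.elim_inr]
    refine if_congr ?_ rfl rfl
    simp only [Fin.lt_def]
    rw [hvr c, hvr c']
    omega
  rw [hA, hB, hC, hD]
  ring

lemma prod_fac_rev (q : ℕ) :
    (∏ c : Fin q, (((q - 1 - (c : ℕ)).factorial : ℕ) : ℝ)) = Gs q := by
  rw [Gs, Fin.prod_univ_eq_prod_range (fun i => (((q - 1 - i).factorial : ℕ) : ℝ)) q,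
    Finset.prod_range_reflect (fun i => ((i.factorial : ℕ) : ℝ)) q]
  exact Finset.prod_congr rfl fun i _ => (Real.Gamma_nat_eq_factorial i).symm

end DVA

/-- **Lemma 2** (limit of a determinant divided by a Vandermonde determinant under
eigenvalue coalescence). As the last `m − n` arguments tend to `a0` within the ordered
region, `det C / Δ(A)` converges to `det E / (Γ_{m−n} · κ(A₀ − a₀ I, m−n))`. -/
theorem det_div_vandermonde_tendsto
    (m n : ℕ) (hn : 1 ≤ n) (hnm : n < m)
    (a : Fin n → ℝ) (ha : StrictAnti a) (a0 : ℝ) (ha0 : ∀ j, a0 < a j)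
    (f : Fin m → ℝ → ℝ)
    (hf : ∀ i, ContDiffAt ℝ (m - n - 1 : ℕ) (f i) a0) :
    Tendsto
      (fun btail : Fin (m - n) → ℝ =>
        Matrix.det (Matrix.of fun i j : Fin m => f i (joinTup n m a btail j))
          / vdm (joinTup n m a btail))
      (𝓝[{btail : Fin (m - n) → ℝ | StrictAnti btail ∧ ∀ i j, btail i < a j}]
        (fun _ => a0))
      (𝓝 (Matrix.det (Matrix.of fun i j : Fin m =>
            if h : (j : ℕ) < n then f i (a ⟨j, h⟩)
            else iteratedDeriv (m - ((j : ℕ) + 1)) (f i) a0)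
          / (Gs (m - n) * kap (fun j => a j - a0) (m - n)))) := by
  classical
  have hq : n + (m - n) = m := by omega
  set EE := DVA.sumEquiv n (m - n) m hq with hEE
  set S : Set (Fin (m - n) → ℝ) := {btail | StrictAnti btail ∧ ∀ i j, btail i < a j} with hS
  set T : Fin (m - n) → Finset (Fin (m - n)) :=
    fun c => Finset.univ.filter (fun l => c ≤ l) with hT
  have hTcard : ∀ c : Fin (m - n), (T c).card = (m - n - 1 - (c : ℕ)) + 1 := by
    intro c
    have h1 : T c = Finset.Ici c := by
      ext l; simp [hT]
    rw [h1, Fin.card_Ici]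
    have := c.isLt; omega
  set M1 : (Fin (m - n) → ℝ) → Matrix (Fin n ⊕ Fin (m - n)) (Fin n ⊕ Fin (m - n)) ℝ :=
    fun b => Matrix.of fun i j =>
      Sum.elim (fun i' => f (EE i) (a i'))
        (fun c => DVA.ddF (f (EE i)) (T c) b) j with hM1
  set L : Matrix (Fin n ⊕ Fin (m - n)) (Fin n ⊕ Fin (m - n)) ℝ :=
    Matrix.of (fun i j =>
      Sum.elim (fun i' => f (EE i) (a i'))
        (fun c : Fin (m - n) => iteratedDeriv (m - n - 1 - (c : ℕ)) (f (EE i)) a0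
          / (((m - n - 1 - (c : ℕ)).factorial : ℕ) : ℝ)) j) with hL
  set Qf : (Fin (m - n) → ℝ) → ℝ := fun b => ∏ i, ∏ c, (a i - b c) with hQf
  -- Step 1 : pointwise identity on S
  have hev : ∀ b ∈ S, Matrix.det (Matrix.of fun i j : Fin m => f i (joinTup n m a b j))
      / vdm (joinTup n m a b) = (M1 b).det / (vdm a * Qf b) := by
    intro b hb
    have hbanti : StrictAnti b := hb.1
    have hdet1 : (Matrix.of fun i j : Fin m => f i (joinTup n m a b j)).det
        = (Matrix.of fun i j : Fin n ⊕ Fin (m - n) => f (EE i) (Sum.elim a b j)).det := by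
      rw [← Matrix.det_submatrix_equiv_self EE]
      congr 1
      ext i j
      simp only [Matrix.submatrix_apply, Matrix.of_apply]
      rw [DVA.joinTup_comp hq a b j]
    have hstep := DVA.det_step (fun i => f (EE i)) a b hbanti
    have hdet2 : (Matrix.of fun i j : Fin n ⊕ Fin (m - n) => f (EE i) (Sum.elim a b j)).det
        = (M1 b).det * vdm b := by
      rw [hstep]
    have hvb : vdm b ≠ 0 := (DVA.vdm_pos hbanti).ne'
    rw [hdet1, hdet2, DVA.vdm_join hq a b,
      show vdm a * (∏ i, ∏ c, (a i - b c)) * vdm b = (vdm a * Qf b) * vdm b from by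
        rw [hQf]]
    exact mul_div_mul_right _ _ hvb
  -- Step 2 : convergence of the reduced expression
  have hmono : 𝓝[S] (fun _ => a0) ≤ 𝓝[{b : Fin (m - n) → ℝ | StrictAnti b}] (fun _ => a0) :=
    nhdsWithin_mono _ (fun b hb => hb.1)
  have hM1tendsto : Tendsto M1 (𝓝[S] (fun _ => a0)) (𝓝 L) := by
    refine tendsto_pi_nhds.2 ?_
    intro i
    rw [tendsto_pi_nhds]
    intro j
    cases j with
    | inl i' =>
      simp only [hM1, hL, Matrix.of_apply, Sum.elim_inl]
      exact tendsto_const_nhds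
    | inr c =>
      simp only [hM1, hL, Matrix.of_apply, Sum.elim_inr]
      have hnat : m - n - 1 - (c : ℕ) ≤ m - n - 1 := Nat.sub_le _ _
      have hje : ((m - n - 1 - (c : ℕ) : ℕ) : WithTop ℕ∞) ≤ ((m - n - 1 : ℕ) : WithTop ℕ∞) := by
        exact_mod_cast hnat
      have hfc : ContDiffAt ℝ (m - n - 1 - (c : ℕ) : ℕ) (f (EE i)) a0 := (hf (EE i)).of_le hje
      exact (DVA.ddF_tendsto (T c) (hTcard c) hfc).mono_left hmono
  have hdetT : Tendsto (fun b => (M1 b).det) (𝓝[S] (fun _ => a0)) (𝓝 L.det) :=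
    ((continuous_id.matrix_det).tendsto L).comp hM1tendsto
  have hQcont : Continuous Qf := by
    rw [hQf]
    apply continuous_finset_prod
    intro i _
    apply continuous_finset_prod
    intro c _
    exact continuous_const.sub (continuous_apply c)
  have hQT : Tendsto Qf (𝓝[S] (fun _ => a0)) (𝓝 (Qf (fun _ => a0))) :=
    (hQcont.tendsto _).mono_left nhdsWithin_le_nhds
  have hQ0pos : 0 < Qf (fun _ => a0) := by
    rw [hQf]
    apply Finset.prod_pos
    intro i _
    apply Finset.prod_pos
    intro c _
    exact sub_pos.2 (ha0 i)
  have hden : vdm a * Qf (fun _ => a0) ≠ 0 :=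
    (mul_pos (DVA.vdm_pos ha) hQ0pos).ne'
  have hTend : Tendsto (fun b => (M1 b).det / (vdm a * Qf b)) (𝓝[S] (fun _ => a0))
      (𝓝 (L.det / (vdm a * Qf (fun _ => a0)))) :=
    hdetT.div ((tendsto_const_nhds).mul hQT) hden
  -- Step 3 : identify the limit
  have hlim : L.det / (vdm a * Qf (fun _ => a0))
      = Matrix.det (Matrix.of fun i j : Fin m =>
          if h : (j : ℕ) < n then f i (a ⟨j, h⟩)
          else iteratedDeriv (m - ((j : ℕ) + 1)) (f i) a0)
        / (Gs (m - n) * kap (fun j => a j - a0) (m - n)) := by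
    -- the statement's limit matrix, reindexed
    have hdet3 : Matrix.det (Matrix.of fun i j : Fin m =>
          if h : (j : ℕ) < n then f i (a ⟨j, h⟩)
          else iteratedDeriv (m - ((j : ℕ) + 1)) (f i) a0)
        = Matrix.det (Matrix.of fun i j : Fin n ⊕ Fin (m - n) =>
            Sum.elim (fun i' => f (EE i) (a i'))
              (fun c : Fin (m - n) => iteratedDeriv (m - n - 1 - (c : ℕ)) (f (EE i)) a0) j) := by
      rw [← Matrix.det_submatrix_equiv_self EE]
      congr 1
      ext i j
      simp only [Matrix.submatrix_apply, Matrix.of_apply]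
      cases j with
      | inl i' =>
        rw [dif_pos (show ((EE (Sum.inl i')) : ℕ) < n by
          rw [hEE, DVA.sumEquiv_inl_val]; exact i'.isLt)]
        simp only [Sum.elim_inl]
        refine congrArg (f (EE i)) (congrArg a (Fin.ext ?_))
        show ((EE (Sum.inl i')) : ℕ) = (i' : ℕ)
        rw [hEE, DVA.sumEquiv_inl_val]
      | inr c =>
        rw [dif_neg (show ¬ ((EE (Sum.inr c)) : ℕ) < n by
          rw [hEE, DVA.sumEquiv_inr_val]; omega)]
        simp only [Sum.elim_inr]
        have hord : m - (((EE (Sum.inr c)) : ℕ) + 1) = m - n - 1 - (c : ℕ) := by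
          rw [hEE, DVA.sumEquiv_inr_val]
          omega
        rw [hord]
    -- L as a column rescaling of the reindexed matrix
    have hLre : L = Matrix.of (fun i j : Fin n ⊕ Fin (m - n) =>
        (Sum.elim (fun _ : Fin n => (1 : ℝ))
          (fun c : Fin (m - n) => ((((m - n - 1 - (c : ℕ)).factorial : ℕ) : ℝ))⁻¹) j) *
        (Matrix.of fun i j : Fin n ⊕ Fin (m - n) =>
            Sum.elim (fun i' => f (EE i) (a i'))
              (fun c : Fin (m - n) => iteratedDeriv (m - n - 1 - (c : ℕ)) (f (EE i)) a0) j) i j) := by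
      rw [hL]
      ext i j
      cases j with
      | inl i' => simp
      | inr c =>
        simp only [Matrix.of_apply, Sum.elim_inr]
        rw [inv_mul_eq_div]
    have hdetL : L.det = (Gs (m - n))⁻¹ *
        Matrix.det (Matrix.of fun i j : Fin n ⊕ Fin (m - n) =>
            Sum.elim (fun i' => f (EE i) (a i'))
              (fun c : Fin (m - n) => iteratedDeriv (m - n - 1 - (c : ℕ)) (f (EE i)) a0) j) := by
      rw [hLre, Matrix.det_mul_row]
      congr 1
      rw [Fintype.prod_sum_type]
      simp only [Sum.elim_inl, Sum.elim_inr, Finset.prod_const_one, one_mul]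
      rw [← DVA.prod_fac_rev (m - n), ← Finset.prod_inv_distrib]
    -- the denominator
    have hQ0 : Qf (fun _ => a0) = (∏ j : Fin n, (a j - a0)) ^ (m - n) := by
      rw [hQf]
      simp only
      rw [← Finset.prod_pow]
      exact Finset.prod_congr rfl fun i _ => by
        rw [Finset.prod_const, Finset.card_univ, Fintype.card_fin]
    have hvdmshift : vdm (fun j => a j - a0) = vdm a := by
      rw [vdm, vdm]
      exact Finset.prod_congr rfl fun p _ => by ring
    have hkap : Gs (m - n) * kap (fun j => a j - a0) (m - n)
        = Gs (m - n) * (vdm a * Qf (fun _ => a0)) := by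
      rw [kap, hvdmshift, hQ0]
    rw [hdet3, hdetL, hkap]
    rw [inv_mul_eq_div, div_div]
  rw [← hlim]
  refine hTend.congr' ?_
  filter_upwards [self_mem_nhdsWithin] with b hb
  exact (hev b hb).symm

end
end
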